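/- The function g(κ) = κ(1-Φ(κ))/Φ'(κ), where Φ is the standard normal CDF and Φ' its density, is strictly increasing on ℝ, satisfies g(0)=0, tends to -∞ as κ → -∞, and tends to 1 as κ → +∞. -/

import Mathlib

open Real MeasureTheory Filter

/-- The standard normal CDF. -/
noncomputable def Phi (x : ℝ) : ℝ := ∫ t in Set.Iic x, (Real.sqrt (2 * Real.pi))⁻¹ * Real.exp (-t ^ 2 / 2)

/-- The standard normal density. -/
noncomputable def phi (x : ℝ) : ℝ := (Real.sqrt (2 * Real.pi))⁻¹ * Real.exp (-x ^ 2 / 2)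

/-- The function `g(κ) = κ(1-Φ(κ))/Φ'(κ)`. -/
noncomputable def g (κ : ℝ) : ℝ := κ * (1 - Phi κ) / phi κ

lemma phi_pos (x : ℝ) : 0 < phi x := by
  unfold phi
  positivity

lemma continuous_phi : Continuous phi := by
  unfold phi; fun_prop

lemma integrable_phi : Integrable phi := by
  have h : Integrable (fun x : ℝ => Real.exp (-(1/2 : ℝ) * x ^ 2)) := integrable_exp_neg_mul_sq (by norm_num)
  have := h.const_mul (Real.sqrt (2 * Real.pi))⁻¹
  refine this.congr (Eventually.of_forall fun x => ?_)
  unfold phi; ring_nf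

lemma integral_phi : ∫ x, phi x = 1 := by
  have h : ∫ x : ℝ, Real.exp (-(1/2 : ℝ) * x ^ 2) = Real.sqrt (Real.pi / (1/2)) := integral_gaussian (1/2)
  have h2 : ∫ x, phi x = (Real.sqrt (2 * Real.pi))⁻¹ * ∫ x : ℝ, Real.exp (-(1/2 : ℝ) * x ^ 2) := by
    rw [← integral_const_mul]
    congr 1; ext x; unfold phi; ring_nf
  rw [h2, h]
  rw [show Real.pi / (1/2) = 2 * Real.pi by ring]
  rw [inv_mul_cancel₀]
  positivity

lemma Phi_eq (x : ℝ) : Phi x = Phi 0 + ∫ t in (0:ℝ)..x, phi t := by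
  have := intervalIntegral.integral_Iic_sub_Iic (integrable_phi.integrableOn (s := Set.Iic 0)) (integrable_phi.integrableOn (s := Set.Iic x))
  unfold Phi
  have h : ∀ y : ℝ, (∫ t in Set.Iic y, (Real.sqrt (2 * Real.pi))⁻¹ * Real.exp (-t ^ 2 / 2)) = ∫ t in Set.Iic y, phi t := fun y => rfl
  rw [h, h]
  linarith [this]

lemma hasDerivAt_Phi (x : ℝ) : HasDerivAt Phi (phi x) x := by
  have h : (fun y => Phi 0 + ∫ t in (0:ℝ)..y, phi t) = Phi := funext fun y => (Phi_eq y).symm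
  rw [← h]
  exact ((continuous_phi.integral_hasStrictDerivAt 0 x).hasDerivAt).const_add (Phi 0)

lemma hasDerivAt_phi (x : ℝ) : HasDerivAt phi (-x * phi x) x := by
  have h1 : HasDerivAt (fun x : ℝ => -x ^ 2 / 2) (-x) x := by
    have := ((hasDerivAt_pow 2 x).neg).div_const 2
    exact this.congr_deriv (by norm_num; ring)
  have h2 := (h1.exp).const_mul (Real.sqrt (2 * Real.pi))⁻¹
  refine h2.congr_deriv ?_
  unfold phi; ring

lemma strictMono_Phi : StrictMono Phi :=
  strictMono_of_deriv_pos fun x => by rw [(hasDerivAt_Phi x).deriv]; exact phi_pos x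

lemma Phi_tendsto_one : Tendsto Phi atTop (nhds 1) := by
  have h1 : Tendsto (fun x => ∫ t in (0:ℝ)..x, phi t) atTop (nhds (∫ t in Set.Ioi 0, phi t)) :=
    intervalIntegral_tendsto_integral_Ioi 0 (integrable_phi.integrableOn) tendsto_id
  have h2 : Phi 0 + ∫ t in Set.Ioi 0, phi t = 1 := by
    have := integral_add_compl (measurableSet_Iic (a := (0:ℝ))) integrable_phi
    rw [Set.compl_Iic] at this
    have h3 : Phi 0 = ∫ t in Set.Iic 0, phi t := rfl
    rw [h3, this, integral_phi]
  have := h1.const_add (Phi 0)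
  rw [h2] at this
  refine this.congr fun x => (Phi_eq x).symm

lemma phi_tendsto_zero : Tendsto phi atTop (nhds 0) := by
  unfold phi
  rw [show (0:ℝ) = (Real.sqrt (2 * Real.pi))⁻¹ * 0 by ring]
  refine Tendsto.const_mul _ ?_
  refine Real.tendsto_exp_atBot.comp ?_
  have : Tendsto (fun x : ℝ => x ^ 2 / 2) atTop atTop :=
    (tendsto_pow_atTop (by norm_num)).atTop_div_const (by norm_num)
  simpa [Function.comp_def, neg_div] using tendsto_neg_atTop_atBot.comp this

lemma one_sub_Phi_tendsto_zero : Tendsto (fun x => 1 - Phi x) atTop (nhds 0) := by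
  have := Phi_tendsto_one.const_sub 1
  simpa using this

noncomputable def hh (κ : ℝ) : ℝ := (1 - Phi κ) - κ * phi κ / (1 + κ ^ 2)

lemma hasDerivAt_hh (κ : ℝ) : HasDerivAt hh (-2 * phi κ / (1 + κ ^ 2) ^ 2) κ := by
  have hden : (1 : ℝ) + κ ^ 2 ≠ 0 := by positivity
  have h1 : HasDerivAt (fun x => 1 - Phi x) (-phi κ) κ := by
    simpa using (hasDerivAt_Phi κ).const_sub 1
  have h2 : HasDerivAt (fun x : ℝ => x * phi x) (1 * phi κ + κ * (-κ * phi κ)) κ :=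
    (hasDerivAt_id κ).mul (hasDerivAt_phi κ)
  have h3 : HasDerivAt (fun x : ℝ => 1 + x ^ 2) (2 * κ) κ := by
    simpa using (hasDerivAt_pow 2 κ).const_add 1
  have h4 := (h2.div h3 hden)
  have h5 := h1.sub h4
  refine h5.congr_deriv ?_
  field_simp
  ring

lemma hh_tendsto_zero : Tendsto hh atTop (nhds 0) := by
  have h1 : Tendsto (fun κ => κ * phi κ / (1 + κ ^ 2)) atTop (nhds 0) := by
    refine tendsto_of_tendsto_of_tendsto_of_le_of_le' (g := fun _ : ℝ => (0:ℝ))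
      (h := fun κ => phi κ / 2) tendsto_const_nhds
      (by simpa using phi_tendsto_zero.div_const 2) ?_ ?_
    · filter_upwards [eventually_ge_atTop (0:ℝ)] with κ hκ
      have := (phi_pos κ).le
      positivity
    · filter_upwards [eventually_ge_atTop (0:ℝ)] with κ hκ
      rw [div_le_div_iff₀ (by positivity) (by norm_num)]
      have h2 : 2 * κ ≤ 1 + κ ^ 2 := by nlinarith [sq_nonneg (κ - 1)]
      nlinarith [phi_pos κ, (phi_pos κ).le]
  have := one_sub_Phi_tendsto_zero.sub h1
  rw [sub_zero] at this
  exact this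

lemma hh_pos (x : ℝ) : 0 < hh x := by
  have hanti : StrictAnti hh := by
    refine strictAnti_of_deriv_neg fun x => ?_
    rw [(hasDerivAt_hh x).deriv]
    have := phi_pos x
    have : (0:ℝ) < (1 + x ^ 2) ^ 2 := by positivity
    have := phi_pos x
    apply div_neg_of_neg_of_pos <;> nlinarith [phi_pos x]
  have h0 : 0 ≤ hh (x + 1) := by
    refine le_of_tendsto hh_tendsto_zero ?_
    filter_upwards [eventually_ge_atTop (x + 1)] with y hy
    exact hanti.antitone hy
  linarith [hanti (lt_add_one x)]

lemma hasDerivAt_g (κ : ℝ) :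
    HasDerivAt g ((1 + κ ^ 2) * hh κ / phi κ) κ := by
  have h1 : HasDerivAt (fun x => x * (1 - Phi x)) (1 * (1 - Phi κ) + κ * (-phi κ)) κ :=
    (hasDerivAt_id κ).mul (by simpa using (hasDerivAt_Phi κ).const_sub 1)
  have h4 := h1.div (hasDerivAt_phi κ) (phi_pos κ).ne'
  refine h4.congr_deriv ?_
  unfold hh
  have hden : (1 : ℝ) + κ ^ 2 ≠ 0 := by positivity
  field_simp [(phi_pos κ).ne']
  ring

lemma strictMono_g : StrictMono g := by
  refine strictMono_of_deriv_pos fun κ => ?_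
  rw [(hasDerivAt_g κ).deriv]
  have h1 := hh_pos κ
  have h2 := phi_pos κ
  positivity

noncomputable def u (κ : ℝ) : ℝ := phi κ / κ - (1 - Phi κ)

lemma hasDerivAt_u {κ : ℝ} (hκ : κ ≠ 0) : HasDerivAt u (-phi κ / κ ^ 2) κ := by
  have h1 := (hasDerivAt_phi κ).div (hasDerivAt_id κ) hκ
  have h2 : HasDerivAt (fun x => 1 - Phi x) (-phi κ) κ := by
    simpa using (hasDerivAt_Phi κ).const_sub 1
  have h3 := h1.sub h2
  refine h3.congr_deriv ?_
  simp only [id]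
  field_simp
  ring

lemma u_tendsto_zero : Tendsto u atTop (nhds 0) := by
  have h1 : Tendsto (fun κ => phi κ / κ) atTop (nhds 0) := by
    have := phi_tendsto_zero.mul tendsto_inv_atTop_zero
    simpa [div_eq_mul_inv] using this
  have := h1.sub one_sub_Phi_tendsto_zero
  rw [sub_zero] at this
  exact this

lemma u_pos {x : ℝ} (hx : 0 < x) : 0 < u x := by
  have hanti : StrictAntiOn u (Set.Ioi 0) := by
    refine strictAntiOn_of_deriv_neg (convex_Ioi 0) ?_ ?_
    · intro y hy
      exact (hasDerivAt_u (ne_of_gt hy)).continuousAt.continuousWithinAt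
    · intro y hy
      rw [interior_Ioi] at hy
      rw [(hasDerivAt_u (ne_of_gt hy)).deriv]
      have := phi_pos y
      have h2 : (0:ℝ) < y ^ 2 := pow_pos (Set.mem_Ioi.mp hy) 2
      exact div_neg_of_neg_of_pos (by linarith) h2
  have h0 : 0 ≤ u (x + 1) := by
    refine le_of_tendsto u_tendsto_zero ?_
    filter_upwards [eventually_ge_atTop (x + 1)] with y hy
    exact hanti.antitoneOn (by simp; linarith) (by simp; linarith) hy
  have := hanti hx (by simp; linarith : x + 1 ∈ Set.Ioi (0:ℝ)) (lt_add_one x)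
  linarith

lemma hh_pos' (κ : ℝ) : κ * phi κ < (1 - Phi κ) * (1 + κ ^ 2) := by
  have h := hh_pos κ
  unfold hh at h
  rw [sub_pos, div_lt_iff₀ (by positivity)] at h
  linarith

lemma u_pos' {κ : ℝ} (hκ : 0 < κ) : κ * (1 - Phi κ) < phi κ := by
  have h := u_pos hκ
  unfold u at h
  rw [sub_pos, lt_div_iff₀ hκ] at h
  linarith

lemma Phi_zero_lt_one : Phi 0 < 1 := by
  have h1 : Phi 1 ≤ 1 := by
    refine ge_of_tendsto Phi_tendsto_one ?_
    filter_upwards [eventually_ge_atTop (1:ℝ)] with y hy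
    exact strictMono_Phi.monotone hy
  linarith [strictMono_Phi (by norm_num : (0:ℝ) < 1)]

lemma g_tendsto_atBot : Tendsto g atBot atBot := by
  set B := 1 - Phi 0 with hB
  have hBpos : 0 < B := by simp [hB]; exact Phi_zero_lt_one
  set S := Real.sqrt (2 * Real.pi) with hS
  have hSpos : 0 < S := by rw [hS]; positivity
  have key : ∀ κ : ℝ, κ ≤ 0 → g κ ≤ (B * S) * κ := by
    intro κ hκ
    have hP := phi_pos κ
    have hSP : S * phi κ ≤ 1 := by
      unfold phi
      rw [← hS]
      rw [show S * (S⁻¹ * Real.exp (-κ ^ 2 / 2)) = Real.exp (-κ ^ 2 / 2) by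
        field_simp]
      exact Real.exp_le_one_iff.mpr (by nlinarith [sq_nonneg κ])
    have hAB : B ≤ 1 - Phi κ := by
      have := strictMono_Phi.monotone hκ
      simp [hB]; linarith
    unfold g
    rw [div_le_iff₀ hP]
    have h1 : κ * (1 - Phi κ) ≤ κ * B := mul_le_mul_of_nonpos_left hAB hκ
    have h2 : κ * B ≤ 0 := mul_nonpos_iff.mpr (Or.inr ⟨hκ, hBpos.le⟩)
    nlinarith
  have htend : Tendsto (fun κ : ℝ => (B * S) * κ) atBot atBot :=
    Tendsto.const_mul_atBot (by positivity) tendsto_id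
  refine tendsto_atBot_mono' atBot ?_ htend
  filter_upwards [eventually_le_atBot (0:ℝ)] with κ hκ using key κ hκ

lemma g_tendsto_one : Tendsto g atTop (nhds 1) := by
  have hlow : Tendsto (fun κ : ℝ => κ ^ 2 / (1 + κ ^ 2)) atTop (nhds 1) := by
    have h1 : Tendsto (fun κ : ℝ => 1 + κ ^ 2) atTop atTop :=
      tendsto_atTop_add_const_left _ 1 (tendsto_pow_atTop (by norm_num))
    have h2 : Tendsto (fun κ : ℝ => 1 - (1 + κ ^ 2)⁻¹) atTop (nhds 1) := by
      have := (tendsto_inv_atTop_zero.comp h1).const_sub 1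
      simpa using this
    refine h2.congr fun κ => ?_
    have : (1:ℝ) + κ ^ 2 ≠ 0 := by positivity
    field_simp
    ring
  refine tendsto_of_tendsto_of_tendsto_of_le_of_le' hlow tendsto_const_nhds ?_ ?_
  · filter_upwards [eventually_gt_atTop (0:ℝ)] with κ hκ
    have h := hh_pos' κ
    unfold g
    rw [div_le_div_iff₀ (by positivity) (phi_pos κ)]
    nlinarith [phi_pos κ]
  · filter_upwards [eventually_gt_atTop (0:ℝ)] with κ hκ
    have h := u_pos' hκ
    unfold g
    rw [div_le_one (phi_pos κ)]
    linarith


/-- g is strictly increasing, g(0)=0, g → -∞ at -∞ and g → 1 at +∞. -/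
theorem stmt0 :
    StrictMono g ∧ g 0 = 0 ∧
    Filter.Tendsto g Filter.atBot Filter.atBot ∧
    Filter.Tendsto g Filter.atTop (nhds 1) :=
  ⟨strictMono_g, by unfold g; simp, g_tendsto_atBot, g_tendsto_one⟩
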